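/- Let X = (x_{ij}) be the n×n generic symmetric matrix (x_{ij} = x_{ji}, indeterminates for i ≤ j) and Y the generic n×1 column. Let g_i = Σ_{j=1}^n x_{min(i,j),max(i,j)} y_j. Then g_1, ..., g_n form a regular sequence in R = K[x_{ij} (i ≤ j), y_j]. -/

import Mathlib

section Aux

variable {A : Type*} [CommRing A]

/-- `a` is a nonzerodivisor modulo the ideal `J`. -/
def NZD (J : Ideal A) (a : A) : Prop := ∀ f, a * f ∈ J → f ∈ J

/-- Koszul-type syzygy lemma. -/
lemma syz : ∀ (k : ℕ) (r c b : Fin k → A),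
    (∀ (m : ℕ) (hm : m < k), NZD (Ideal.span (r '' {i | i.val < m})) (r ⟨m, hm⟩)) →
    (∑ i, c i * r i = 0) →
    (∑ i, c i * b i) ∈ Ideal.span {x | ∃ i j, x = r i * b j - r j * b i} := by
  intro k
  induction k with
  | zero => intro r c b _ _; simp
  | succ k IH =>
    intro r c b hreg hsum
    set r' : Fin k → A := fun i => r i.castSucc with hr'
    set c' : Fin k → A := fun i => c i.castSucc with hc'
    set b' : Fin k → A := fun i => b i.castSucc with hb'
    have himg : r '' {i : Fin (k+1) | i.val < k} = Set.range r' := by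
      rw [← Fin.range_castSucc]
      exact (Set.range_comp r Fin.castSucc).symm
    have hlast : r (Fin.last k) * c (Fin.last k) ∈ Ideal.span (Set.range r') := by
      rw [mul_comm]
      have : c (Fin.last k) * r (Fin.last k) = -∑ i, c' i * r' i := by
        rw [eq_neg_iff_add_eq_zero, ← hsum, Fin.sum_univ_castSucc]
        ring
      rw [this]
      refine neg_mem (Ideal.sum_mem _ fun i _ => ?_)
      exact Ideal.mul_mem_left _ _ (Ideal.subset_span ⟨i, rfl⟩)
    have hck : c (Fin.last k) ∈ Ideal.span (Set.range r') := by
      have := hreg k (Nat.lt_succ_self k)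
      rw [himg] at this
      exact this _ hlast
    obtain ⟨d, hd⟩ := Ideal.mem_span_range_iff_exists_fun.mp hck
    set C2 : Fin k → A := fun i => c' i + d i * r (Fin.last k) with hC2
    have hsum' : ∑ i, C2 i * r' i = 0 := by
      have expand : ∑ i, C2 i * r' i
          = ∑ i, c' i * r' i + (∑ i, d i * r' i) * r (Fin.last k) := by
        rw [Finset.sum_mul, ← Finset.sum_add_distrib]
        exact Finset.sum_congr rfl fun i _ => by ring
      rw [expand, hd]
      rw [Fin.sum_univ_castSucc (f := fun i => c i * r i)] at hsum
      exact hsum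
    have hreg' : ∀ (m : ℕ) (hm : m < k),
        NZD (Ideal.span (r' '' {i | i.val < m})) (r' ⟨m, hm⟩) := by
      intro m hm
      have himg2 : r' '' {i : Fin k | i.val < m} = r '' {i : Fin (k+1) | i.val < m} := by
        rw [hr']
        ext x
        constructor
        · rintro ⟨i, hi, rfl⟩; exact ⟨i.castSucc, hi, rfl⟩
        · rintro ⟨i, hi, rfl⟩
          exact ⟨⟨i.val, lt_trans hi hm⟩, hi, rfl⟩
      rw [himg2]
      exact hreg m (hm.trans (Nat.lt_succ_self k))
    have hIH := IH r' C2 b' hreg' hsum'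
    have hsub : Ideal.span {x | ∃ i j, x = r' i * b' j - r' j * b' i}
        ≤ Ideal.span {x | ∃ i j, x = r i * b j - r j * b i} := by
      apply Ideal.span_mono
      rintro x ⟨i, j, rfl⟩
      exact ⟨i.castSucc, j.castSucc, rfl⟩
    have key : ∑ i, c i * b i
        = (∑ i, C2 i * b' i) + ∑ i, d i * (r' i * b (Fin.last k) - r (Fin.last k) * b' i) := by
      rw [Fin.sum_univ_castSucc (f := fun i => c i * b i), ← hd]
      rw [← Finset.sum_add_distrib, Finset.sum_mul, ← Finset.sum_add_distrib]
      exact Finset.sum_congr rfl fun i _ => by ring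
    rw [key]
    refine add_mem (hsub hIH) (Ideal.sum_mem _ fun i _ => Ideal.mul_mem_left _ _ ?_)
    exact Ideal.subset_span ⟨i.castSucc, Fin.last k, rfl⟩

end Aux


section Aux2

variable {A : Type*} [CommRing A]

open Polynomial

/-- A linear polynomial whose leading coefficient is an NZD mod `I` is an NZD
mod the extension of `I`. -/
lemma lead_NZD (I : Ideal A) (u w : A) (hu : ∀ f, u * f ∈ I → f ∈ I) :
    NZD (I.map (Polynomial.C : A →+* A[X])) (Polynomial.C u * Polynomial.X + Polynomial.C w) := by
  suffices H : ∀ (d : ℕ) (F : A[X]), F.natDegree ≤ d →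
      (Polynomial.C u * Polynomial.X + Polynomial.C w) * F ∈ I.map (C : A →+* A[X]) →
      F ∈ I.map (C : A →+* A[X]) by
    intro F hF
    exact H F.natDegree F le_rfl hF
  intro d
  induction d with
  | zero =>
    intro F hdeg hF
    have hFe : F = C (F.coeff 0) := Polynomial.eq_C_of_natDegree_le_zero hdeg
    rw [Ideal.mem_map_C_iff] at hF
    have h1 := hF 1
    have hco : ((C u * X + C w) * F).coeff 1 = u * F.coeff 0 + w * F.coeff 1 := by
      rw [add_mul, coeff_add, mul_assoc, coeff_C_mul, coeff_X_mul, coeff_C_mul]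
    have hc1 : F.coeff 1 = 0 := by
      rw [hFe]; simp
    rw [hco, hc1, mul_zero, add_zero] at h1
    rw [hFe]
    exact Ideal.mem_map_of_mem _ (hu _ h1)
  | succ d IH =>
    intro F hdeg hF
    rcases Nat.lt_or_ge F.natDegree (d+1) with h | h
    · exact IH F (Nat.lt_succ_iff.mp h) hF
    have hdeq : F.natDegree = d + 1 := le_antisymm hdeg h
    have hlc : F.leadingCoeff ∈ I := by
      rw [Ideal.mem_map_C_iff] at hF
      have h2 := hF (d + 2)
      have : ((C u * X + C w) * F).coeff (d+2) = u * F.coeff (d+1) := by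
        rw [add_mul, coeff_add, mul_assoc, coeff_C_mul, coeff_X_mul, coeff_C_mul,
          Polynomial.coeff_eq_zero_of_natDegree_lt (by omega : F.natDegree < d+2)]
        ring
      rw [this, ← hdeq] at h2
      exact hu _ h2
    have hCmem : C F.leadingCoeff * X ^ F.natDegree ∈ I.map (C : A →+* A[X]) :=
      Ideal.mul_mem_right _ _ (Ideal.mem_map_of_mem _ hlc)
    have hsplit : F = F.eraseLead + C F.leadingCoeff * X ^ F.natDegree :=
      (Polynomial.eraseLead_add_C_mul_X_pow F).symm
    have hmem1 : (C u * X + C w) * F.eraseLead ∈ I.map (C : A →+* A[X]) := by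
      have hM : (C u * X + C w) * F.eraseLead
            + (C u * X + C w) * (C F.leadingCoeff * X ^ F.natDegree)
          = (C u * X + C w) * F := by
        rw [← mul_add, Polynomial.eraseLead_add_C_mul_X_pow]
      rw [eq_sub_of_add_eq hM]
      exact sub_mem hF (Ideal.mul_mem_left _ _ hCmem)
    have hel : F.eraseLead ∈ I.map (C : A →+* A[X]) := by
      refine IH _ ?_ hmem1
      have := Polynomial.eraseLead_natDegree_le F
      omega
    rw [← Polynomial.eraseLead_add_C_mul_X_pow F]
    exact add_mem hel hCmem

/-- `X` is an NZD modulo an ideal generated by `C aᵢ + C bᵢ * X` provided syzygies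
of the `aᵢ` pair against the `bᵢ` into the obvious ideal. -/
lemma X_NZD (k : ℕ) (a b : Fin k → A)
    (hsyz : ∀ c : Fin k → A, ∑ i, c i * a i = 0 →
      (∑ i, c i * b i) ∈ Ideal.span {x | ∃ i j, x = a i * b j - a j * b i}) :
    NZD (Ideal.span (Set.range fun i => Polynomial.C (a i) + Polynomial.C (b i) * Polynomial.X))
      (Polynomial.X : A[X]) := by
  set g : Fin k → A[X] := fun i => C (a i) + C (b i) * X with hg
  have hXcancel : ∀ p q : A[X], X * p = X * q → p = q := by
    intro p q hpq
    ext m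
    have := congrArg (fun r => Polynomial.coeff r (m+1)) hpq
    simpa [coeff_X_mul] using this
  intro f hf
  obtain ⟨q, hq⟩ := Ideal.mem_span_range_iff_exists_fun.mp hf
  set c : Fin k → A := fun i => (q i).coeff 0 with hc
  set e : Fin k → A[X] := fun i => (q i).divX with he
  have hqi : ∀ i, q i = X * e i + C (c i) := fun i => (Polynomial.X_mul_divX_add (q i)).symm
  have hgc : ∀ i, (g i).coeff 0 = a i := by intro i; simp [hg]
  have hca : ∑ i, c i * a i = 0 := by
    have hq0 : ∀ i, (q i * g i).coeff 0 = c i * a i := by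
      intro i; rw [Polynomial.mul_coeff_zero, hgc]
    calc ∑ i, c i * a i = ∑ i, (q i * g i).coeff 0 := by
          exact Finset.sum_congr rfl fun i _ => (hq0 i).symm
      _ = (∑ i, q i * g i).coeff 0 := (Polynomial.finset_sum_coeff _ _ _).symm
      _ = (X * f).coeff 0 := by rw [hq]
      _ = 0 := by simp
  have hterm : ∀ i, q i * g i = X * (e i * g i) + (C (c i * a i) + X * C (c i * b i)) := by
    intro i
    rw [hqi i, hg]
    simp only [map_mul]
    ring
  have hkey : ∑ i, q i * g i = X * (∑ i, e i * g i + C (∑ i, c i * b i)) := by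
    rw [Finset.sum_congr rfl fun i _ => hterm i, Finset.sum_add_distrib,
      Finset.sum_add_distrib, ← Finset.mul_sum, ← Finset.mul_sum,
      show (∑ i, Polynomial.C (c i * a i)) = Polynomial.C (∑ i, c i * a i) from
        (map_sum _ _ _).symm,
      hca, map_zero, zero_add,
      show (∑ i, Polynomial.C (c i * b i)) = Polynomial.C (∑ i, c i * b i) from
        (map_sum _ _ _).symm]
    ring
  rw [hq] at hkey
  have hfeq : f = ∑ i, e i * g i + C (∑ i, c i * b i) := hXcancel _ _ hkey
  rw [hfeq]
  refine add_mem (Ideal.sum_mem _ fun i _ => Ideal.mul_mem_left _ _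
    (Ideal.subset_span ⟨i, rfl⟩)) ?_
  have hm := hsyz c hca
  have : Polynomial.C (∑ i, c i * b i) ∈
      Ideal.map (Polynomial.C : A →+* A[X]) (Ideal.span {x | ∃ i j, x = a i * b j - a j * b i}) :=
    Ideal.mem_map_of_mem _ hm
  rw [Ideal.map_span] at this
  refine Ideal.span_le.mpr ?_ this
  rintro x ⟨y, ⟨i, j, rfl⟩, rfl⟩
  have : (Polynomial.C : A →+* A[X]) (a i * b j - a j * b i)
      = g i * C (b j) - g j * C (b i) := by
    simp only [hg, map_sub, map_mul, RingHom.coe_coe]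
    ring
  rw [this]
  exact sub_mem (Ideal.mul_mem_right _ _ (Ideal.subset_span ⟨i, rfl⟩))
    (Ideal.mul_mem_right _ _ (Ideal.subset_span ⟨j, rfl⟩))

lemma NZD.map {B : Type*} [CommRing B] (e : A ≃+* B) {J : Ideal A} {a : A} (h : NZD J a) :
    NZD (J.map (e : A →+* B)) (e a) := by
  have hmem : ∀ x : B, x ∈ J.map (e : A →+* B) → e.symm x ∈ J := by
    intro x hx
    have hle : J.map (e : A →+* B) ≤ J.comap (e.symm : B →+* A) := by
      rw [Ideal.map_le_iff_le_comap]
      intro y hy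
      simp only [Ideal.mem_comap, RingHom.coe_coe, RingEquiv.symm_apply_apply]
      exact hy
    exact hle hx
  intro f hf
  have : e.symm (e a * f) ∈ J := hmem _ hf
  rw [map_mul, RingEquiv.symm_apply_apply] at this
  have := h _ this
  have : e (e.symm f) ∈ J.map (e : A →+* B) := Ideal.mem_map_of_mem _ this
  rwa [RingEquiv.apply_symm_apply] at this

open Polynomial in
lemma NZD.of_map_C {I : Ideal A} {u : A}
    (h : NZD (I.map (Polynomial.C : A →+* A[X])) (Polynomial.C u)) : NZD I u := by
  intro f hf
  have : (Polynomial.C u) * (Polynomial.C f) ∈ I.map (Polynomial.C : A →+* A[X]) := by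
    rw [← map_mul]
    exact Ideal.mem_map_of_mem _ hf
  have := h _ this
  rw [Ideal.mem_map_C_iff] at this
  simpa using this 0

lemma NZD.span_mapA {B : Type*} [CommRing B] {K : Type*} [CommSemiring K] [Algebra K A]
    [Algebra K B] (e : A ≃ₐ[K] B) {s : Set A} {w : A} (h : NZD (Ideal.span s) w) :
    NZD (Ideal.span (⇑e '' s)) (e w) := by
  have h2 := h.map e.toRingEquiv
  rw [Ideal.map_span] at h2
  exact h2

/-- Bridge from `NZD` statements to `IsWeaklyRegular`. -/
lemma bridge (k : ℕ) (r : Fin k → A)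
    (h : ∀ (m : ℕ) (hm : m < k), NZD (Ideal.span (r '' {i | i.val < m})) (r ⟨m, hm⟩)) :
    RingTheory.Sequence.IsWeaklyRegular A (List.ofFn r) := by
  constructor
  intro i hi
  rw [List.length_ofFn] at hi
  have hgi : (List.ofFn r)[i] = r ⟨i, hi⟩ := by
    simp [List.getElem_ofFn]
  have hideal : Ideal.ofList ((List.ofFn r).take i) = Ideal.span (r '' {j | j.val < i}) := by
    unfold Ideal.ofList
    congr 1
    ext x
    simp only [List.mem_take_iff_getElem, List.getElem_ofFn, List.length_ofFn, Set.mem_setOf_eq,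
      Set.mem_image]
    constructor
    · rintro ⟨m, hm, rfl⟩
      exact ⟨⟨m, by omega⟩, by simpa using (by omega : m < i), rfl⟩
    · rintro ⟨j, hj, rfl⟩
      exact ⟨j.val, by simp; omega, by congr⟩
  have hsmul : (Ideal.ofList ((List.ofFn r).take i) • ⊤ : Submodule A A)
      = Submodule.restrictScalars A (Ideal.span (r '' {j | j.val < i})) := by
    rw [hideal, Ideal.smul_eq_mul, Ideal.mul_top]
    rfl
  rw [hgi]
  intro x y hxy
  obtain ⟨f, rfl⟩ := Submodule.Quotient.mk_surjective _ x
  obtain ⟨g', rfl⟩ := Submodule.Quotient.mk_surjective _ y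
  simp only [← Submodule.Quotient.mk_smul] at hxy
  rw [Submodule.Quotient.eq] at hxy ⊢
  rw [hsmul] at hxy ⊢
  have : r ⟨i, hi⟩ • f - r ⟨i, hi⟩ • g' = r ⟨i, hi⟩ * (f - g') := by
    simp [smul_eq_mul]; ring
  rw [this] at hxy
  exact h i hi _ hxy

end Aux2



open MvPolynomial

section Machinery

variable {K : Type*} [CommRing K]

/-- Remove one variable from an `MvPolynomial` ring. -/
noncomputable def ev (K : Type*) [CommRing K] {σ : Type*} [DecidableEq σ] (v : σ) :
    MvPolynomial σ K ≃ₐ[K] Polynomial (MvPolynomial {u : σ // u ≠ v} K) :=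
  (renameEquiv K (Equiv.optionSubtypeNe v).symm).trans (optionEquivLeft K _)

lemma ev_X_self {σ : Type*} [DecidableEq σ] (v : σ) :
    ev K v (X v) = Polynomial.X := by
  unfold ev
  simp [renameEquiv_apply, rename_X, Equiv.optionSubtypeNe_symm_self,
    optionEquivLeft_X_none]

lemma ev_X_ne {σ : Type*} [DecidableEq σ] (v u : σ) (h : u ≠ v) :
    ev K v (X u) = Polynomial.C (X ⟨u, h⟩) := by
  unfold ev
  simp [renameEquiv_apply, rename_X, Equiv.optionSubtypeNe_symm_of_ne h,
    optionEquivLeft_X_some]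

end Machinery

section Main

variable {K : Type*} [CommRing K] {n : ℕ}

abbrev SymT (n : ℕ) := ({p : Fin n × Fin n // p.1 ≤ p.2} ⊕ Fin n)

noncomputable def xx (K : Type*) [CommRing K] (n : ℕ) (i j : Fin n) : MvPolynomial (SymT n) K :=
  X (Sum.inl ⟨(min i j, max i j), min_le_max⟩)

noncomputable def yy (K : Type*) [CommRing K] (n : ℕ) (j : Fin n) : MvPolynomial (SymT n) K :=
  X (Sum.inr j)

noncomputable def Gg (K : Type*) [CommRing K] (n : ℕ) (S : Finset (Fin n)) (i : Fin n) :
    MvPolynomial (SymT n) K :=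
  ∑ j ∈ S, xx K n i j * yy K n j

/-- The x-variables, in the ring with `y j` removed. -/
noncomputable def xxA (K : Type*) [CommRing K] (n : ℕ) (j t j' : Fin n) :
    MvPolynomial {u : SymT n // u ≠ Sum.inr j} K :=
  X ⟨Sum.inl ⟨(min t j', max t j'), min_le_max⟩, fun h => nomatch h⟩

noncomputable def yyA (K : Type*) [CommRing K] (n : ℕ) (j j' : Fin n) :
    MvPolynomial {u : SymT n // u ≠ Sum.inr j} K :=
  if h : j' = j then 0 else X ⟨Sum.inr j', fun he => h (Sum.inr.inj he)⟩

/-- The distinguished diagonal variable. -/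
def vI (n : ℕ) (i : Fin n) : SymT n := Sum.inl ⟨(i, i), le_refl i⟩

/-- The x-variables, in the ring with `x i i` removed. -/
noncomputable def xxB (K : Type*) [CommRing K] (n : ℕ) (i t j' : Fin n) :
    MvPolynomial {u : SymT n // u ≠ vI n i} K :=
  if h : (Sum.inl ⟨(min t j', max t j'), min_le_max⟩ : SymT n) = vI n i then 0
  else X ⟨Sum.inl ⟨(min t j', max t j'), min_le_max⟩, h⟩

noncomputable def yyB (K : Type*) [CommRing K] (n : ℕ) (i j' : Fin n) :
    MvPolynomial {u : SymT n // u ≠ vI n i} K :=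
  X ⟨Sum.inr j', fun he => nomatch he⟩

lemma ev_Gg_noj (j : Fin n) (S' : Finset (Fin n)) (hj : j ∉ S') (t : Fin n) :
    ev K (Sum.inr j : SymT n) (Gg K n S' t)
      = Polynomial.C (∑ j' ∈ S', xxA K n j t j' * yyA K n j j') := by
  unfold Gg
  rw [map_sum]
  refine Eq.trans (Finset.sum_congr rfl fun j' hj' => ?_) (map_sum Polynomial.C _ _).symm
  have hne : j' ≠ j := fun h => hj (h ▸ hj')
  rw [map_mul]
  unfold xx yy
  rw [ev_X_ne _ _ Sum.inl_ne_inr, ev_X_ne _ _ (fun he => hne (Sum.inr.inj he)),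
    ← map_mul]
  congr 1
  unfold xxA yyA
  rw [dif_neg hne]

lemma ev_Gg_withj (j : Fin n) (S : Finset (Fin n)) (hjS : j ∈ S) (t : Fin n) :
    ev K (Sum.inr j : SymT n) (Gg K n S t)
      = Polynomial.C (∑ j' ∈ S.erase j, xxA K n j t j' * yyA K n j j')
        + Polynomial.C (xxA K n j t j) * Polynomial.X := by
  unfold Gg
  rw [← Finset.sum_erase_add S _ hjS, map_add]
  congr 1
  · exact ev_Gg_noj j (S.erase j) (Finset.notMem_erase j S) t
  · rw [map_mul]
    unfold xx yy
    rw [ev_X_ne _ _ Sum.inl_ne_inr, ev_X_self]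
    rfl

lemma inl_ne_vI {i t j' : Fin n} (ht : t ≠ i) :
    (Sum.inl ⟨(min t j', max t j'), min_le_max⟩ : SymT n) ≠ vI n i := by
  intro h
  unfold vI at h
  rw [Sum.inl.injEq, Subtype.mk.injEq, Prod.mk.injEq] at h
  exact ht (le_antisymm (h.2 ▸ le_max_left t j') (h.1 ▸ min_le_left t j'))

lemma inl_ne_vI' {i j' : Fin n} (hj' : j' ≠ i) :
    (Sum.inl ⟨(min i j', max i j'), min_le_max⟩ : SymT n) ≠ vI n i := by
  intro h
  unfold vI at h
  rw [Sum.inl.injEq, Subtype.mk.injEq, Prod.mk.injEq] at h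
  exact hj' (le_antisymm (h.2 ▸ le_max_right i j') (h.1 ▸ min_le_right i j'))

lemma ev_Gg_offdiag (i : Fin n) (S' : Finset (Fin n)) (t : Fin n) (ht : t ≠ i) :
    ev K (vI n i) (Gg K n S' t)
      = Polynomial.C (∑ j' ∈ S', xxB K n i t j' * yyB K n i j') := by
  unfold Gg
  rw [map_sum]
  refine Eq.trans (Finset.sum_congr rfl fun j' _ => ?_) (map_sum Polynomial.C _ _).symm
  rw [map_mul]
  unfold xx yy
  rw [ev_X_ne _ _ (inl_ne_vI ht), ev_X_ne (vI n i) (Sum.inr j') Sum.inr_ne_inl, ← map_mul]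
  congr 1
  unfold xxB yyB
  rw [dif_neg (inl_ne_vI ht)]

lemma xx_diag (i : Fin n) : xx K n i i = X (vI n i) := by
  unfold xx vI
  congr 1
  rw [Sum.inl.injEq, Subtype.mk.injEq, Prod.mk.injEq]
  exact ⟨min_self i, max_self i⟩

lemma ev_Gg_diag (i : Fin n) (S : Finset (Fin n)) (hiS : i ∈ S) :
    ev K (vI n i) (Gg K n S i)
      = Polynomial.C (yyB K n i i) * Polynomial.X
        + Polynomial.C (∑ j' ∈ S.erase i, xxB K n i i j' * yyB K n i j') := by
  unfold Gg
  rw [← Finset.sum_erase_add S _ hiS, map_add]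
  rw [add_comm]
  congr 1
  · rw [map_mul, xx_diag, ev_X_self]
    unfold yy
    rw [ev_X_ne (vI n i) (Sum.inr i) Sum.inr_ne_inl]
    rw [mul_comm]
    rfl
  · rw [map_sum]
    refine Eq.trans (Finset.sum_congr rfl fun j' hj' => ?_) (map_sum Polynomial.C _ _).symm
    have hne : j' ≠ i := (Finset.mem_erase.mp hj').1
    rw [map_mul]
    unfold xx yy
    rw [ev_X_ne _ _ (inl_ne_vI' hne), ev_X_ne (vI n i) (Sum.inr j') Sum.inr_ne_inl, ← map_mul]
    congr 1
    unfold xxB yyB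
    rw [dif_neg (inl_ne_vI' hne)]

end Main

section Master

variable {K : Type*} [CommRing K] {n : ℕ}

lemma master (K : Type*) [CommRing K] (n : ℕ) (N : ℕ) :
    ∀ (S T : Finset (Fin n)), S.card ≤ N → T ⊆ S →
    (∀ j, j ∈ S → j ∉ T → NZD (Ideal.span (Gg K n S '' ↑T)) (yy K n j)) ∧
    (∀ i, i ∈ S → i ∉ T → NZD (Ideal.span (Gg K n S '' ↑T)) (Gg K n S i)) := by
  induction N with
  | zero =>
    intro S T hcard _
    have hS : S = ∅ := Finset.card_eq_zero.mp (Nat.le_zero.mp hcard)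
    constructor <;> (intro j hj; rw [hS] at hj; exact absurd hj (Finset.notMem_empty j))
  | succ N IH =>
    intro S T hcard hTS
    -- MB part
    have hMB : ∀ j, j ∈ S → j ∉ T → NZD (Ideal.span (Gg K n S '' ↑T)) (yy K n j) := by
      intro j hjS hjT
      set v : SymT n := Sum.inr j with hv
      set k := T.card with hk
      set τ : Fin k → Fin n := fun m => ((T.orderIsoOfFin rfl) m : Fin n) with hτ
      have hτT : ∀ m, τ m ∈ T := fun m => ((T.orderIsoOfFin rfl) m).2
      have hτinj : Function.Injective τ :=
        fun m m' h => (T.orderIsoOfFin rfl).injective (Subtype.ext h)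
      have hτrange : Set.range τ = ↑T := by
        ext t
        constructor
        · rintro ⟨m, rfl⟩; exact hτT m
        · intro ht
          obtain ⟨m, hm⟩ := (T.orderIsoOfFin rfl).surjective ⟨t, ht⟩
          exact ⟨m, congrArg Subtype.val hm⟩
      set a : Fin k → MvPolynomial {u : SymT n // u ≠ v} K :=
        fun m => ∑ j' ∈ S.erase j, xxA K n j (τ m) j' * yyA K n j j' with ha
      set b : Fin k → MvPolynomial {u : SymT n // u ≠ v} K :=
        fun m => xxA K n j (τ m) j with hb
      -- syzygy-regularity hypothesis via induction
      have hreg : ∀ (m : ℕ) (hm : m < k),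
          NZD (Ideal.span (a '' {i | i.val < m})) (a ⟨m, hm⟩) := by
        intro m hm
        set Tm : Finset (Fin n) :=
          Finset.image τ (Finset.univ.filter (fun i : Fin k => i.val < m)) with hTm
        have hTmT : Tm ⊆ S.erase j := by
          intro t ht
          rw [hTm, Finset.mem_image] at ht
          obtain ⟨i, _, rfl⟩ := ht
          refine Finset.mem_erase.mpr ⟨?_, hTS (hτT i)⟩
          intro h
          exact hjT (h ▸ hτT i)
        have hcard' : (S.erase j).card ≤ N := by
          rw [Finset.card_erase_of_mem hjS]
          omega
        have hτm_mem : τ ⟨m, hm⟩ ∈ S.erase j := by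
          refine Finset.mem_erase.mpr ⟨?_, hTS (hτT _)⟩
          intro h
          exact hjT (h ▸ hτT _)
        have hτm_nmem : τ ⟨m, hm⟩ ∉ Tm := by
          rw [hTm, Finset.mem_image]
          rintro ⟨i, hi, hii⟩
          rw [Finset.mem_filter] at hi
          have h5 := congrArg Fin.val (hτinj hii)
          simp only [] at h5
          omega
        have hstep := (IH (S.erase j) Tm hcard' hTmT).2 (τ ⟨m, hm⟩) hτm_mem hτm_nmem
        -- transport to the smaller ring
        have h2 := hstep.span_mapA (ev K v)
        have himg : ⇑(ev K v) '' (Gg K n (S.erase j) '' ↑Tm)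
            = ⇑Polynomial.C '' (a '' {i : Fin k | i.val < m}) := by
          rw [Set.image_image]
          have : ∀ t ∈ (↑Tm : Set (Fin n)), ev K v (Gg K n (S.erase j) t)
              = Polynomial.C (∑ j' ∈ S.erase j, xxA K n j t j' * yyA K n j j') :=
            fun t _ => ev_Gg_noj j (S.erase j) (Finset.notMem_erase j S) t
          rw [Set.image_congr this]
          have hTmc : (↑Tm : Set (Fin n)) = τ '' {i : Fin k | i.val < m} := by
            rw [hTm, Finset.coe_image]
            congr 1
            ext i
            simp
          rw [hTmc, Set.image_image, ← Set.image_image (g := ⇑Polynomial.C)]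
        rw [himg, ← Ideal.map_span] at h2
        have hev : ev K v (Gg K n (S.erase j) (τ ⟨m, hm⟩)) = Polynomial.C (a ⟨m, hm⟩) :=
          ev_Gg_noj j (S.erase j) (Finset.notMem_erase j S) _
        rw [hev] at h2
        exact NZD.of_map_C h2
      -- X is NZD mod the transported ideal
      have hX := X_NZD k a b (fun c hc => syz k a c b hreg hc)
      -- transport back
      have h4 := hX.span_mapA (ev K v).symm
      have himg2 : ⇑(ev K v).symm ''
            (Set.range fun m => Polynomial.C (a m) + Polynomial.C (b m) * Polynomial.X)
          = Gg K n S '' ↑T := by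
        rw [← Set.range_comp, ← hτrange, ← Set.range_comp]
        refine congrArg Set.range (funext fun m => ?_)
        show (ev K v).symm (Polynomial.C (a m) + Polynomial.C (b m) * Polynomial.X)
          = Gg K n S (τ m)
        rw [← ev_Gg_withj j S hjS (τ m)]
        exact (ev K v).symm_apply_apply _
      have hXsym : (ev K v).symm Polynomial.X = yy K n j := by
        rw [show (Polynomial.X : Polynomial (MvPolynomial {u : SymT n // u ≠ v} K))
          = ev K v (yy K n j) from (ev_X_self v).symm]
        exact (ev K v).symm_apply_apply _
      rw [himg2, hXsym] at h4
      exact h4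
    refine ⟨hMB, ?_⟩
    -- MA part
    intro i hiS hiT
    set v : SymT n := vI n i with hv
    have hMBi := hMB i hiS hiT
    -- transport hMBi to the smaller ring
    have h2 := hMBi.span_mapA (ev K v)
    have himgT : ⇑(ev K v) '' (Gg K n S '' ↑T)
        = ⇑Polynomial.C '' ((fun t => ∑ j' ∈ S, xxB K n i t j' * yyB K n i j') '' ↑T) := by
      rw [Set.image_image]
      have : ∀ t ∈ (↑T : Set (Fin n)), ev K v (Gg K n S t)
          = Polynomial.C (∑ j' ∈ S, xxB K n i t j' * yyB K n i j') := by
        intro t ht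
        exact ev_Gg_offdiag i S t (fun h => hiT (h ▸ ht))
      rw [Set.image_congr this, ← Set.image_image (g := ⇑Polynomial.C)]
    have hevy : ev K v (yy K n i) = Polynomial.C (yyB K n i i) := by
      unfold yy
      exact ev_X_ne _ _ Sum.inr_ne_inl
    rw [himgT, ← Ideal.map_span, hevy] at h2
    have hu := NZD.of_map_C h2
    -- leading coefficient argument
    have hlead := lead_NZD
      (Ideal.span ((fun t => ∑ j' ∈ S, xxB K n i t j' * yyB K n i j') '' ↑T))
      (yyB K n i i) (∑ j' ∈ S.erase i, xxB K n i i j' * yyB K n i j') hu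
    -- transport back
    have h4 := by
      have := hlead
      rw [Ideal.map_span] at this
      exact this.span_mapA (ev K v).symm
    have himgBack : ⇑(ev K v).symm '' (⇑Polynomial.C ''
          ((fun t => ∑ j' ∈ S, xxB K n i t j' * yyB K n i j') '' ↑T))
        = Gg K n S '' ↑T := by
      rw [Set.image_image, Set.image_image]
      refine Set.image_congr fun t ht => ?_
      show (ev K v).symm (Polynomial.C (∑ j' ∈ S, xxB K n i t j' * yyB K n i j')) = Gg K n S t
      rw [← ev_Gg_offdiag i S t (fun h => hiT (h ▸ ht))]
      exact (ev K v).symm_apply_apply _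
    have hGback : (ev K v).symm
          (Polynomial.C (yyB K n i i) * Polynomial.X
            + Polynomial.C (∑ j' ∈ S.erase i, xxB K n i i j' * yyB K n i j'))
        = Gg K n S i := by
      rw [← ev_Gg_diag i S hiS]
      exact (ev K v).symm_apply_apply _
    rw [himgBack, hGback] at h4
    exact h4

end Master

open MvPolynomial

/-- With `X` the generic symmetric `n×n` matrix (indeterminates `x i j` for `i ≤ j`) and
`Y` the generic column, the entries `g i = ∑ j x (min i j) (max i j) * y j` of `X * Y`
form a regular sequence in `R = K[x i j (i ≤ j), y j]`. -/
theorem generic_symmetric_XY_entries_regular_sequence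
    {K : Type*} [Field K] (n : ℕ)
    (xv : (p : Fin n × Fin n) → p.1 ≤ p.2 →
      MvPolynomial ({p : Fin n × Fin n // p.1 ≤ p.2} ⊕ Fin n) K)
    (yv : Fin n → MvPolynomial ({p : Fin n × Fin n // p.1 ≤ p.2} ⊕ Fin n) K)
    (hx : ∀ p hp, xv p hp = MvPolynomial.X (Sum.inl ⟨p, hp⟩))
    (hy : ∀ j, yv j = MvPolynomial.X (Sum.inr j))
    (g : Fin n → MvPolynomial ({p : Fin n × Fin n // p.1 ≤ p.2} ⊕ Fin n) K)
    (hg : ∀ i, g i = ∑ j, xv (min i j, max i j) min_le_max * yv j) :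
    RingTheory.Sequence.IsWeaklyRegular
      (MvPolynomial ({p : Fin n × Fin n // p.1 ≤ p.2} ⊕ Fin n) K) (List.ofFn g) := by
  have hgG : g = Gg K n Finset.univ := by
    funext i
    rw [hg]
    unfold Gg xx yy
    exact Finset.sum_congr rfl fun jj _ => by rw [hx, hy]
  apply bridge n g
  intro m hm
  have hmain := (master K n n Finset.univ (Finset.univ.filter fun i : Fin n => i.val < m)
    (by simp) (Finset.filter_subset _ _)).2 ⟨m, hm⟩ (Finset.mem_univ _)
    (by simp)
  have hset : (↑(Finset.univ.filter fun i : Fin n => i.val < m) : Set (Fin n))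
      = {i : Fin n | i.val < m} := by
    ext i
    simp
  rw [hset] at hmain
  rw [hgG]
  exact hmain
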